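/- Let f be a partial Boolean function and ε ∈ [0, 1/2). Then R_ε(f) ≥ R̄_ε(f) ≥ (1 − 2ε) · RS(f). In particular, randomized sabotage complexity is a lower bound on bounded-error randomized query complexity: R(f) = Ω(RS(f)). -/

import Mathlib

/-! ### Decision trees -/

/-- A deterministic decision tree querying positions of type `ι`, receiving answers
in `α`, and producing an output in `β`. -/
inductive DTree (ι α β : Type) : Type
  | leaf (b : β) : DTree ι α β
  | node (i : ι) (next : α → DTree ι α β) : DTree ι α β

namespace DTree

variable {ι α β : Type}

/-- The output of a decision tree on input `x`. -/
def output : DTree ι α β → (ι → α) → β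
  | leaf b, _ => b
  | node i next, x => (next (x i)).output x

/-- The number of queries made by a decision tree on input `x`. -/
def cost : DTree ι α β → (ι → α) → ℕ
  | leaf _, _ => 0
  | node i next, x => (next (x i)).cost x + 1

/-- The set of positions queried by a decision tree on input `x`. -/
def queries : DTree ι α β → (ι → α) → Set ι
  | leaf _, _ => ∅
  | node i next, x => insert i ((next (x i)).queries x)

end DTree

/-- A partial function on inputs `ι → α` with outputs in `β`; `none` means undefined
(the domain is the set of inputs mapped to `some` value). -/
abbrev PFn (ι α β : Type) := (ι → α) → Option β

/-- `t` computes the partial function `f` (correct on every input of the domain). -/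
def DTree.computesP {ι α β : Type} (t : DTree ι α β) (f : PFn ι α β) : Prop :=
  ∀ x b, f x = some b → t.output x = b

/-- Deterministic query complexity `D(f)`. -/
noncomputable def Dq {ι α β : Type} (f : PFn ι α β) : ℝ :=
  sInf {T : ℝ | 0 ≤ T ∧ ∃ t : DTree ι α β, t.computesP f ∧ ∀ x, (t.cost x : ℝ) ≤ T}

/-! ### Randomized query algorithms -/

/-- A randomized query algorithm: a finitely supported probability distribution over
deterministic decision trees. -/
structure RandAlg (ι α β : Type) where
  Ω : Type
  [fin : Fintype Ω]
  p : Ω → ℝ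
  nonneg : ∀ ω, 0 ≤ p ω
  sum_one : ∑ ω, p ω = 1
  tree : Ω → DTree ι α β

namespace RandAlg

variable {ι α β : Type}

/-- Expected number of queries of `A` on input `x`. -/
noncomputable def expCost (A : RandAlg ι α β) (x : ι → α) : ℝ :=
  letI := A.fin
  ∑ ω, A.p ω * ((A.tree ω).cost x : ℝ)

open Classical in
/-- Probability that `A` outputs `b` on input `x`. -/
noncomputable def succProb (A : RandAlg ι α β) (x : ι → α) (b : β) : ℝ :=
  letI := A.fin
  ∑ ω, if (A.tree ω).output x = b then A.p ω else 0

/-- `A` computes `f` with error at most `ε`: on every input of the domain the correct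
output is produced with probability at least `1 - ε`. -/
def Computes (A : RandAlg ι α β) (f : PFn ι α β) (ε : ℝ) : Prop :=
  ∀ x b, f x = some b → 1 - ε ≤ A.succProb x b

/-- The worst-case cost of `A` (over all inputs and all trees in the support) is at most `T`. -/
def WCostLe (A : RandAlg ι α β) (T : ℝ) : Prop :=
  ∀ ω, A.p ω ≠ 0 → ∀ x, ((A.tree ω).cost x : ℝ) ≤ T

/-- The expected cost of `A` on every input of the domain of `f` is at most `T`. -/
def ECostLe (A : RandAlg ι α β) (f : PFn ι α β) (T : ℝ) : Prop :=
  ∀ x, (f x).isSome → A.expCost x ≤ T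

end RandAlg

/-- `R_ε(f)`: minimum worst-case cost of an `ε`-error randomized algorithm for `f`. -/
noncomputable def Rw {ι α β : Type} (ε : ℝ) (f : PFn ι α β) : ℝ :=
  sInf {T : ℝ | 0 ≤ T ∧ ∃ A : RandAlg ι α β, A.Computes f ε ∧ A.WCostLe T}

/-- `R̄_ε(f)`: minimum expected cost of an `ε`-error randomized algorithm for `f`. -/
noncomputable def Rbar {ι α β : Type} (ε : ℝ) (f : PFn ι α β) : ℝ :=
  sInf {T : ℝ | 0 ≤ T ∧ ∃ A : RandAlg ι α β, A.Computes f ε ∧ A.ECostLe f T}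

/-- `R₀(f)`: zero-error expected randomized query complexity. -/
noncomputable def R0 {ι α β : Type} (f : PFn ι α β) : ℝ := Rbar 0 f

/-- `R(f) := R_{1/3}(f)`: bounded-error randomized query complexity. -/
noncomputable def Rb {ι α β : Type} (f : PFn ι α β) : ℝ := Rw (1/3) f

/-- The total function `f` viewed as a partial function. -/
def tot {ι α β : Type} (f : (ι → α) → β) : PFn ι α β := fun x => some (f x)


/-! ### Sabotage complexity and composition -/

/-- The four-letter alphabet `{0, 1, *, †}` of sabotaged inputs. -/
inductive Sab : Type
  | zero : Sab
  | one : Sab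
  | star : Sab
  | dagger : Sab
deriving DecidableEq

/-- Embedding of Boolean values into the sabotage alphabet. -/
def Sab.ofBool : Bool → Sab
  | false => Sab.zero
  | true => Sab.one

/-- `p` is consistent with the Boolean input `x`: wherever `p` has a Boolean entry,
it agrees with `x`. -/
def SabConsistent {ι : Type} (p : ι → Sab) (x : ι → Bool) : Prop :=
  ∀ i, p i = Sab.ofBool (x i) ∨ p i = Sab.star ∨ p i = Sab.dagger

/-- `p` is a sabotaged input for `f` using the sabotage symbol `s`: all entries of `p`
lie in `{0, 1, s}` and `p` is consistent with both a `0`-input and a `1`-input of `f`. -/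
def IsSabotaged {ι : Type} (f : PFn ι Bool Bool) (s : Sab) (p : ι → Sab) : Prop :=
  (∀ i, p i = Sab.zero ∨ p i = Sab.one ∨ p i = s) ∧
  ∃ x y, (f x).isSome ∧ (f y).isSome ∧ f x ≠ f y ∧ SabConsistent p x ∧ SabConsistent p y

open Classical in
/-- The sabotage problem `f_sab` associated with `f`: it is `0` on `P_f` (inputs
sabotaged with `*`) and `1` on `P_f†` (inputs sabotaged with `†`). -/
noncomputable def fsab {ι : Type} (f : PFn ι Bool Bool) : PFn ι Sab Bool :=
  fun p =>
    if IsSabotaged f Sab.star p then some false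
    else if IsSabotaged f Sab.dagger p then some true
    else none

open Classical in
/-- `f_usab`: the restriction of `f_sab` to inputs having exactly one `*` or `†` entry. -/
noncomputable def fusab {ι : Type} (f : PFn ι Bool Bool) : PFn ι Sab Bool :=
  fun p =>
    if ∃! i, p i = Sab.star ∨ p i = Sab.dagger then fsab f p else none

/-- Randomized sabotage complexity `RS(f) := R₀(f_sab)`. -/
noncomputable def RS {ι : Type} (f : PFn ι Bool Bool) : ℝ := R0 (fsab f)

/-- `RS_u(f) := R₀(f_usab)` (this is `0` automatically when `f_usab` has empty domain). -/
noncomputable def RSu {ι : Type} (f : PFn ι Bool Bool) : ℝ := R0 (fusab f)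

open Classical in
/-- Composition `f ∘ g` of partial functions: defined on an input exactly when every
inner copy of `g` is defined and the tuple of inner values lies in the domain of `f`. -/
noncomputable def pcomp {κ ι α β γ : Type} (f : PFn κ β γ) (g : PFn ι α β) :
    PFn (κ × ι) α γ :=
  fun x =>
    if h : ∀ i : κ, (g fun j => x (i, j)).isSome then
      f fun i => (g fun j => x (i, j)).get (h i)
    else none

/-- Index types for iterated self-composition. -/
def IterIdx (κ : Type) : ℕ → Type
  | 0 => κ
  | n + 1 => κ × IterIdx κ n

/-- `iterComp f n` is `f` composed with itself `n + 1` times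
(`iterComp f 0 = f`, `iterComp f (n+1) = f ∘ iterComp f n`). -/
noncomputable def iterComp {κ : Type} (f : PFn κ Bool Bool) : (n : ℕ) → PFn (IterIdx κ n) Bool Bool
  | 0 => f
  | n + 1 => pcomp f (iterComp f n)

/-! ### The index function -/

/-- The value of a bit-string read as a binary number (bit `i` has weight `2^i`). -/
def binval {b : ℕ} (x : Fin b → Bool) : ℕ := ∑ i, if x i then 2 ^ (i : ℕ) else 0

theorem sum_range_two_pow (b : ℕ) : ∑ i ∈ Finset.range b, 2 ^ i = 2 ^ b - 1 := by
  induction b with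
  | zero => simp
  | succ n ih =>
    rw [Finset.sum_range_succ, ih, pow_succ]
    have : 1 ≤ 2 ^ n := Nat.one_le_two_pow
    omega

theorem binval_lt {b : ℕ} (x : Fin b → Bool) : binval x < 2 ^ b := by
  have h1 : binval x ≤ ∑ i : Fin b, 2 ^ (i : ℕ) := by
    refine Finset.sum_le_sum fun i _ => ?_
    split <;> simp
  have h2 : ∑ i : Fin b, 2 ^ (i : ℕ) = 2 ^ b - 1 := by
    rw [Fin.sum_univ_eq_sum_range (fun i => 2 ^ i) b]
    exact sum_range_two_pow b
  have h3 : 0 < 2 ^ b := Nat.pow_pos (by norm_num)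
  omega

/-- The largest `c` with `c + 2^c ≤ m`. -/
def indexC (m : ℕ) : ℕ := Nat.findGreatest (fun c => c + 2 ^ c ≤ m) m

/-- The index function `Ind_m : {0,1}^m → {0,1}`: the first `c` bits (where `c` is the
largest integer with `c + 2^c ≤ m`) are read as a binary address `y` into the next
`2^c` bits, and the output is the addressed bit. -/
def IndFn (m : ℕ) : PFn (Fin m) Bool Bool :=
  fun x =>
    let c := indexC m
    let y := ∑ i : Fin m, if (i : ℕ) < c ∧ x i = true then 2 ^ (i : ℕ) else 0
    if h : c + y < m then some (x ⟨c + y, h⟩) else none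

/-- `f^{⊕c}_ind`: the index function on `c + 2^c` bits with `f` composed into each of
the `c` address bits only. -/
def findex {n : ℕ} (f : PFn (Fin n) Bool Bool) (c : ℕ) :
    PFn ((Fin c × Fin n) ⊕ Fin (2 ^ c)) Bool Bool :=
  fun x =>
    if h : ∀ i : Fin c, (f fun j => x (Sum.inl (i, j))).isSome then
      some (x (Sum.inr ⟨binval fun i => (f fun j => x (Sum.inl (i, j))).get (h i),
        binval_lt _⟩))
    else none



/-! ### Auxiliary machinery for the proof -/

section Aux

variable {ι α β : Type}

/-- Output of a sabotaged symbol. -/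
def sabOut : Sab → Bool
  | Sab.dagger => true
  | _ => false

/-- Run a Boolean decision tree on a sabotaged input, stopping with the answer as soon
as a sabotaged entry is found; `none` means no sabotaged entry was queried. -/
def sabify : DTree ι Bool Bool → DTree ι Sab (Option Bool)
  | .leaf _ => .leaf none
  | .node i next => .node i fun a =>
      match a with
      | Sab.zero => sabify (next false)
      | Sab.one => sabify (next true)
      | Sab.star => .leaf (some false)
      | Sab.dagger => .leaf (some true)

/-- Replace the `none` leaves of a tree by another tree. -/
def graft : DTree ι α (Option β) → DTree ι α β → DTree ι α β
  | .leaf none, t => t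
  | .leaf (some b), _ => .leaf b
  | .node i next, t => .node i fun a => graft (next a) t

theorem graft_output_some {u : DTree ι α (Option β)} {t : DTree ι α β} {x : ι → α} {b : β}
    (h : u.output x = some b) : (graft u t).output x = b := by
  induction u with
  | leaf o =>
    cases o with
    | none => simp [DTree.output] at h
    | some b' =>
      simp only [DTree.output, Option.some.injEq] at h
      subst h; simp [graft, DTree.output]
  | node i next ih =>
    simp only [DTree.output] at h
    simpa [graft, DTree.output] using ih (x i) h

theorem graft_output_none {u : DTree ι α (Option β)} {t : DTree ι α β} {x : ι → α}
    (h : u.output x = none) : (graft u t).output x = t.output x := by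
  induction u with
  | leaf o =>
    cases o with
    | none => simp [graft]
    | some b' => simp [DTree.output] at h
  | node i next ih =>
    simp only [DTree.output] at h
    simpa [graft, DTree.output] using ih (x i) h

open Classical in
theorem graft_cost_le (u : DTree ι α (Option β)) (t : DTree ι α β) (x : ι → α) :
    (graft u t).cost x ≤ u.cost x + (if u.output x = none then t.cost x else 0) := by
  induction u with
  | leaf o =>
    cases o with
    | none => simp [graft, DTree.cost, DTree.output]
    | some b' => simp [graft, DTree.cost, DTree.output]
  | node i next ih =>
    simp only [graft, DTree.cost, DTree.output]
    have := ih (x i)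
    by_cases hc : (next (x i)).output x = none
    · simp [hc] at this ⊢; omega
    · simp [hc] at this ⊢; omega

theorem Sab.ofBool_ne_star (b : Bool) : Sab.ofBool b ≠ Sab.star := by cases b <;> simp [Sab.ofBool]
theorem Sab.ofBool_ne_dagger (b : Bool) : Sab.ofBool b ≠ Sab.dagger := by cases b <;> simp [Sab.ofBool]
theorem Sab.ofBool_inj {a b : Bool} (h : Sab.ofBool a = Sab.ofBool b) : a = b := by
  cases a <;> cases b <;> simp_all [Sab.ofBool]

/-- The cost of a sabotaged run is at most the cost of the run on any consistent input. -/
theorem sabify_cost_le {t : DTree ι Bool Bool} {p : ι → Sab} {x : ι → Bool}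
    (hc : SabConsistent p x) : (sabify t).cost p ≤ t.cost x := by
  induction t with
  | leaf b => simp [sabify, DTree.cost]
  | node i next ih =>
    simp only [sabify, DTree.cost]
    rcases hc i with h | h | h
    · cases hx : x i <;> rw [hx] at h <;> rw [h] <;>
        simpa [DTree.cost, hx] using Nat.add_le_add_right (by simpa [hx, Sab.ofBool] using ih (x i)) 1
    · rw [h]; simp [DTree.cost]
    · rw [h]; simp [DTree.cost]

/-- If a sabotaged run finds nothing, the underlying tree behaves identically on all
consistent Boolean inputs. -/
theorem sabify_output_none {t : DTree ι Bool Bool} {p : ι → Sab} {x y : ι → Bool}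
    (h : (sabify t).output p = none) (hx : SabConsistent p x) (hy : SabConsistent p y) :
    t.output x = t.output y := by
  induction t with
  | leaf b => rfl
  | node i next ih =>
    have hns : p i ≠ Sab.star := by
      intro hp; simp only [sabify, DTree.output] at h; rw [hp] at h
      simp [DTree.output] at h
    have hnd : p i ≠ Sab.dagger := by
      intro hp; simp only [sabify, DTree.output] at h; rw [hp] at h
      simp [DTree.output] at h
    have h1 : p i = Sab.ofBool (x i) := (hx i).resolve_right (by tauto)
    have h2 : p i = Sab.ofBool (y i) := (hy i).resolve_right (by tauto)
    have hxy : x i = y i := Sab.ofBool_inj (h1 ▸ h2)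
    simp only [sabify, DTree.output] at h ⊢
    rw [← hxy]
    cases hx2 : x i <;> rw [hx2] at h1 <;> simp only [Sab.ofBool] at h1 <;>
      rw [h1] at h <;> exact (hx2 ▸ ih (x i)) h

/-- If a sabotaged run finds something on an `s`-sabotaged input, its answer is `sabOut s`. -/
theorem sabify_output_some {t : DTree ι Bool Bool} {p : ι → Sab} {s : Sab} {b : Bool}
    (hs : s = Sab.star ∨ s = Sab.dagger)
    (hall : ∀ i, p i = Sab.zero ∨ p i = Sab.one ∨ p i = s)
    (h : (sabify t).output p = some b) : b = sabOut s := by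
  induction t with
  | leaf b' => simp [sabify, DTree.output] at h
  | node i next ih =>
    simp only [sabify, DTree.output] at h
    rcases hall i with h1 | h1 | h1
    · rw [h1] at h; exact ih false h
    · rw [h1] at h; exact ih true h
    · rcases hs with hs | hs <;> rw [hs] at h1 <;> rw [h1] at h <;>
        simp [DTree.output, hs, sabOut] at h ⊢ <;> simp [h.symm]

/-- Linear search for a sabotaged entry. -/
def searchTree : List ι → DTree ι Sab Bool
  | [] => .leaf false
  | i :: l => .node i fun a =>
      match a with
      | Sab.star => .leaf false
      | Sab.dagger => .leaf true
      | _ => searchTree l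

theorem searchTree_cost_le (l : List ι) (p : ι → Sab) :
    (searchTree l).cost p ≤ l.length := by
  induction l with
  | nil => simp [searchTree, DTree.cost]
  | cons i l ih =>
    simp only [searchTree, DTree.cost, List.length_cons]
    cases p i <;> simp [DTree.cost] <;> omega

theorem searchTree_output {l : List ι} {p : ι → Sab} {s : Sab}
    (hs : s = Sab.star ∨ s = Sab.dagger)
    (hall : ∀ i, p i = Sab.zero ∨ p i = Sab.one ∨ p i = s)
    (hex : ∃ i ∈ l, p i = s) :
    (searchTree l).output p = sabOut s := by
  induction l with
  | nil => simp at hex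
  | cons i l ih =>
    obtain ⟨j, hj, hjs⟩ := hex
    simp only [searchTree, DTree.output]
    rcases hall i with h1 | h1 | h1
    · rw [h1]
      refine ih ⟨j, ?_, hjs⟩
      rcases List.mem_cons.1 hj with rfl | hj
      · exfalso; rw [h1] at hjs; rcases hs with rfl | rfl <;> simp at hjs
      · exact hj
    · rw [h1]
      refine ih ⟨j, ?_, hjs⟩
      rcases List.mem_cons.1 hj with rfl | hj
      · exfalso; rw [h1] at hjs; rcases hs with rfl | rfl <;> simp at hjs
      · exact hj
    · rw [h1]; rcases hs with rfl | rfl <;> simp [DTree.output, sabOut]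

/-- A brute-force tree that queries every position in `l` and outputs a function of the
gathered answers. -/
def enumTree [DecidableEq ι] (out : (ι → α) → β) : List ι → (ι → α) → DTree ι α β
  | [], g => .leaf (out g)
  | i :: l, g => .node i fun a => enumTree out l (Function.update g i a)

theorem enumTree_cost [DecidableEq ι] (out : (ι → α) → β) (l : List ι) (g : ι → α)
    (x : ι → α) : (enumTree out l g).cost x = l.length := by
  induction l generalizing g with
  | nil => simp [enumTree, DTree.cost]
  | cons i l ih => simp [enumTree, DTree.cost, ih]

theorem enumTree_output [DecidableEq ι] (out : (ι → α) → β) (l : List ι) (g : ι → α)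
    (x : ι → α) :
    (enumTree out l g).output x = out (fun j => if j ∈ l then x j else g j) := by
  induction l generalizing g with
  | nil => simp [enumTree, DTree.output]
  | cons i l ih =>
    simp only [enumTree, DTree.output, ih]
    congr 1
    funext j
    by_cases hjl : j ∈ l
    · simp [hjl]
    · by_cases hji : j = i
      · subst hji; simp [hjl, Function.update]
      · simp [hjl, hji, Function.update]

/-- Structure of the sabotage problem's domain. -/
theorem fsab_eq_some {n : ℕ} {f : PFn (Fin n) Bool Bool} {p : Fin n → Sab} {b : Bool}
    (h : fsab f p = some b) :
    ∃ s, (s = Sab.star ∨ s = Sab.dagger) ∧ IsSabotaged f s p ∧ b = sabOut s := by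
  unfold fsab at h
  split at h
  · exact ⟨Sab.star, Or.inl rfl, ‹_›, by cases h; rfl⟩
  · split at h
    · exact ⟨Sab.dagger, Or.inr rfl, ‹_›, by cases h; rfl⟩
    · exact absurd h (by simp)

theorem exists_sab_entry {n : ℕ} {f : PFn (Fin n) Bool Bool} {s : Sab} {p : Fin n → Sab}
    (hs : s = Sab.star ∨ s = Sab.dagger) (h : IsSabotaged f s p) : ∃ i, p i = s := by
  obtain ⟨hall, x, y, hx, hy, hxy, hcx, hcy⟩ := h
  by_contra hne
  push_neg at hne
  apply hxy
  have key : ∀ i, p i ≠ Sab.star ∧ p i ≠ Sab.dagger := by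
    intro i
    rcases hall i with h2 | h2 | h2
    · rw [h2]; exact ⟨by simp, by simp⟩
    · rw [h2]; exact ⟨by simp, by simp⟩
    · exact absurd h2 (hne i)
  have hxyeq : x = y := by
    funext i
    have h1 : p i = Sab.ofBool (x i) := (hcx i).resolve_right (by have := key i; tauto)
    have h2 : p i = Sab.ofBool (y i) := (hcy i).resolve_right (by have := key i; tauto)
    exact Sab.ofBool_inj (h1 ▸ h2)
  rw [hxyeq]

/-! ### Algorithm constructions -/

/-- A deterministic algorithm as a trivial randomized algorithm. -/
def detAlg {α β : Type} (t : DTree ι α β) : RandAlg ι α β where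
  Ω := Unit
  p _ := 1
  nonneg _ := zero_le_one
  sum_one := by simp
  tree _ := t

/-- Run `A` on the sabotaged input, answering upon finding a sabotaged entry, and
falling back to `B` otherwise. -/
noncomputable def seqAlg (A : RandAlg ι Bool Bool) (B : RandAlg ι Sab Bool) :
    RandAlg ι Sab Bool :=
  letI := A.fin
  letI := B.fin
  { Ω := A.Ω × B.Ω
    p := fun w => A.p w.1 * B.p w.2
    nonneg := fun w => mul_nonneg (A.nonneg _) (B.nonneg _)
    sum_one := by
      rw [Fintype.sum_prod_type]
      simp [← Finset.mul_sum, B.sum_one, A.sum_one]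
    tree := fun w => graft (sabify (A.tree w.1)) (B.tree w.2) }

/-- Iterate `A` up to `k` times, finishing with the fallback tree `fb`. -/
noncomputable def sabAlg (A : RandAlg ι Bool Bool) (fb : DTree ι Sab Bool) :
    ℕ → RandAlg ι Sab Bool
  | 0 => detAlg fb
  | k + 1 => seqAlg A (sabAlg A fb k)

theorem succProb_eq_one {α β : Type} {A : RandAlg ι α β} {x : ι → α} {b : β}
    (h : ∀ ω, (A.tree ω).output x = b) : A.succProb x b = 1 := by
  classical
  letI := A.fin
  show (∑ ω, if (A.tree ω).output x = b then A.p ω else 0) = 1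
  rw [← A.sum_one]
  exact Finset.sum_congr rfl fun ω _ => by simp [h ω]

theorem expCost_nonneg {α β : Type} (A : RandAlg ι α β) (x : ι → α) : 0 ≤ A.expCost x := by
  letI := A.fin
  exact Finset.sum_nonneg fun ω _ => mul_nonneg (A.nonneg ω) (Nat.cast_nonneg _)

theorem detAlg_expCost {α β : Type} (t : DTree ι α β) (x : ι → α) :
    (detAlg t).expCost x = (t.cost x : ℝ) := by
  show (∑ _ : Unit, 1 * ((t.cost x : ℝ))) = _
  simp

/-- Every deterministic tree of `sabAlg` answers the sabotage problem correctly. -/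
theorem sabAlg_tree_output {A : RandAlg ι Bool Bool} {fb : DTree ι Sab Bool}
    {p : ι → Sab} {s : Sab} {b : Bool}
    (hs : s = Sab.star ∨ s = Sab.dagger)
    (hall : ∀ i, p i = Sab.zero ∨ p i = Sab.one ∨ p i = s)
    (hb : b = sabOut s)
    (hfb : fb.output p = b) :
    ∀ k ω, ((sabAlg A fb k).tree ω).output p = b := by
  intro k
  induction k with
  | zero => intro ω; exact hfb
  | succ k ih =>
    intro ω
    show (graft (sabify (A.tree ω.1)) ((sabAlg A fb k).tree ω.2)).output p = b
    cases hout : (sabify (A.tree ω.1)).output p with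
    | none => exact (graft_output_none hout).trans (ih ω.2)
    | some b' =>
      rw [graft_output_some hout]
      exact (sabify_output_some hs hall hout).trans hb.symm

theorem prod_sum_helper {Ω₁ Ω₂ : Type} [Fintype Ω₁] [Fintype Ω₂]
    (a c : Ω₁ → ℝ) (b d : Ω₂ → ℝ) :
    ∑ w : Ω₁ × Ω₂, (a w.1 * b w.2 + c w.1 * d w.2)
      = (∑ w, a w) * (∑ w, b w) + (∑ w, c w) * (∑ w, d w) := by
  rw [Fintype.sum_prod_type]
  simp [Finset.sum_add_distrib, ← Finset.mul_sum, ← Finset.sum_mul]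

/-- Key one-round bound: the expected cost of `seqAlg A B` is at most one (expected)
run of `A` plus, with probability at most `2ε`, the cost of `B`. -/
theorem seqAlg_expCost_le {A : RandAlg ι Bool Bool} {B : RandAlg ι Sab Bool}
    {p : ι → Sab} {x y : ι → Bool} {bx by' : Bool} {ε T : ℝ}
    (hcx : SabConsistent p x) (hcy : SabConsistent p y) (hbxy : bx ≠ by')
    (hsx : 1 - ε ≤ A.succProb x bx) (hsy : 1 - ε ≤ A.succProb y by')
    (hex : A.expCost x ≤ T) :
    (seqAlg A B).expCost p ≤ T + 2*ε * B.expCost p := by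
  classical
  letI := A.fin
  letI := B.fin
  set I : A.Ω → ℝ := fun ω => if (sabify (A.tree ω)).output p = none then 1 else 0 with hI
  have step1 : ∀ w : A.Ω × B.Ω,
      (A.p w.1 * B.p w.2) * ((graft (sabify (A.tree w.1)) (B.tree w.2)).cost p : ℝ)
      ≤ (A.p w.1 * ((sabify (A.tree w.1)).cost p : ℝ)) * (B.p w.2)
        + (A.p w.1 * I w.1) * (B.p w.2 * ((B.tree w.2).cost p : ℝ)) := by
    intro w
    have h := graft_cost_le (sabify (A.tree w.1)) (B.tree w.2) p
    have hpq : 0 ≤ A.p w.1 * B.p w.2 := mul_nonneg (A.nonneg _) (B.nonneg _)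
    by_cases hn : (sabify (A.tree w.1)).output p = none
    · simp only [hn, if_pos] at h
      simp only [hI, hn, if_pos]
      have h' : ((graft (sabify (A.tree w.1)) (B.tree w.2)).cost p : ℝ)
          ≤ ((sabify (A.tree w.1)).cost p : ℝ) + ((B.tree w.2).cost p : ℝ) := by
        exact_mod_cast h
      nlinarith [A.nonneg w.1, B.nonneg w.2]
    · simp only [hn, if_neg, if_false] at h
      simp only [hI, hn, if_neg, if_false]
      have h' : ((graft (sabify (A.tree w.1)) (B.tree w.2)).cost p : ℝ)
          ≤ ((sabify (A.tree w.1)).cost p : ℝ) := by exact_mod_cast h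
      nlinarith [A.nonneg w.1, B.nonneg w.2]
  have hC : (∑ ω, A.p ω * ((sabify (A.tree ω)).cost p : ℝ)) ≤ T := by
    refine le_trans (Finset.sum_le_sum fun ω _ => ?_) hex
    exact mul_le_mul_of_nonneg_left (Nat.cast_le.2 (sabify_cost_le hcx)) (A.nonneg ω)
  have hspx : A.succProb x bx = ∑ ω, if (A.tree ω).output x = bx then A.p ω else 0 := by
    show (∑ ω, _) = _
    refine Finset.sum_congr rfl fun ω _ => ?_
    split_ifs with h1 h2 <;> first | rfl | (exfalso; exact h2 h1) | (exfalso; exact h1 h2)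
  have hspy : A.succProb y by' = ∑ ω, if (A.tree ω).output y = by' then A.p ω else 0 := by
    show (∑ ω, _) = _
    refine Finset.sum_congr rfl fun ω _ => ?_
    split_ifs with h1 h2 <;> first | rfl | (exfalso; exact h2 h1) | (exfalso; exact h1 h2)
  have herrx : (∑ ω, if (A.tree ω).output x = bx then 0 else A.p ω) ≤ ε := by
    have hsum : A.succProb x bx + (∑ ω, if (A.tree ω).output x = bx then 0 else A.p ω) = 1 := by
      rw [hspx, ← Finset.sum_add_distrib, ← A.sum_one]
      exact Finset.sum_congr rfl fun ω _ => by split_ifs <;> ring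
    linarith
  have herry : (∑ ω, if (A.tree ω).output y = by' then 0 else A.p ω) ≤ ε := by
    have hsum : A.succProb y by' + (∑ ω, if (A.tree ω).output y = by' then 0 else A.p ω) = 1 := by
      rw [hspy, ← Finset.sum_add_distrib, ← A.sum_one]
      exact Finset.sum_congr rfl fun ω _ => by split_ifs <;> ring
    linarith
  have hQ : (∑ ω, A.p ω * I ω) ≤ 2*ε := by
    have hpt : ∀ ω, A.p ω * I ω ≤ (if (A.tree ω).output x = bx then 0 else A.p ω)
        + (if (A.tree ω).output y = by' then 0 else A.p ω) := by
      intro ω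
      by_cases hn : (sabify (A.tree ω)).output p = none
      · have hnb : ¬((A.tree ω).output x = bx ∧ (A.tree ω).output y = by') := by
          rintro ⟨e1, e2⟩
          apply hbxy
          rw [← e1, ← e2]
          exact sabify_output_none hn hcx hcy
        simp only [hI, hn, if_pos, mul_one]
        split_ifs with h1 h2
        · exact absurd ⟨h1, h2⟩ hnb
        · linarith [A.nonneg ω]
        · linarith [A.nonneg ω]
        · linarith [A.nonneg ω]
      · simp only [hI, hn, if_neg, if_false, mul_zero]
        split_ifs <;> simp <;> linarith [A.nonneg ω]
    calc (∑ ω, A.p ω * I ω) ≤ _ := Finset.sum_le_sum fun ω _ => hpt ω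
      _ = (∑ ω, if (A.tree ω).output x = bx then 0 else A.p ω)
          + (∑ ω, if (A.tree ω).output y = by' then 0 else A.p ω) := Finset.sum_add_distrib
      _ ≤ ε + ε := add_le_add herrx herry
      _ = 2*ε := by ring
  calc (seqAlg A B).expCost p
      = ∑ w : A.Ω × B.Ω, (A.p w.1 * B.p w.2)
          * ((graft (sabify (A.tree w.1)) (B.tree w.2)).cost p : ℝ) := rfl
    _ ≤ ∑ w : A.Ω × B.Ω, ((A.p w.1 * ((sabify (A.tree w.1)).cost p : ℝ)) * (B.p w.2)
          + (A.p w.1 * I w.1) * (B.p w.2 * ((B.tree w.2).cost p : ℝ))) :=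
        Finset.sum_le_sum fun w _ => step1 w
    _ = (∑ ω, A.p ω * ((sabify (A.tree ω)).cost p : ℝ)) * (∑ σ, B.p σ)
          + (∑ ω, A.p ω * I ω) * (∑ σ, B.p σ * ((B.tree σ).cost p : ℝ)) :=
        prod_sum_helper (fun ω => A.p ω * ((sabify (A.tree ω)).cost p : ℝ))
          (fun ω => A.p ω * I ω) (fun σ => B.p σ)
          (fun σ => B.p σ * ((B.tree σ).cost p : ℝ))
    _ = (∑ ω, A.p ω * ((sabify (A.tree ω)).cost p : ℝ))
          + (∑ ω, A.p ω * I ω) * B.expCost p := by rw [B.sum_one, mul_one]; rfl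
    _ ≤ T + 2*ε * B.expCost p := by
        have hE : 0 ≤ B.expCost p := expCost_nonneg B p
        have := mul_le_mul_of_nonneg_right hQ hE
        linarith

/-- Master cost bound for the iterated sabotage-finding algorithm. -/
theorem sabAlg_expCost_le {n : ℕ} {f : PFn (Fin n) Bool Bool} {A : RandAlg (Fin n) Bool Bool}
    {ε T : ℝ} (hε0 : 0 ≤ ε)
    (hcomp : A.Computes f ε) (hcost : A.ECostLe f T)
    {p : Fin n → Sab} {s : Sab}
    (hs : s = Sab.star ∨ s = Sab.dagger) (hsab : IsSabotaged f s p) :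
    ∀ k, (sabAlg A (searchTree (List.finRange n)) k).expCost p ≤
      T * (∑ j ∈ Finset.range k, (2*ε)^j) + (n : ℝ) * (2*ε)^k := by
  obtain ⟨hall, x, y, hx, hy, hxy, hcx, hcy⟩ := hsab
  obtain ⟨bx, hbx⟩ := Option.isSome_iff_exists.1 hx
  obtain ⟨by', hby⟩ := Option.isSome_iff_exists.1 hy
  have hbxy : bx ≠ by' := fun h => hxy (by rw [hbx, hby, h])
  have hsx := hcomp x bx hbx
  have hsy := hcomp y by' hby
  have hexx : A.expCost x ≤ T := hcost x hx
  intro k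
  induction k with
  | zero =>
    rw [show sabAlg A (searchTree (List.finRange n)) 0
        = detAlg (searchTree (List.finRange n)) from rfl, detAlg_expCost]
    simp only [Finset.range_zero, Finset.sum_empty, mul_zero, pow_zero, mul_one, zero_add]
    calc ((searchTree (List.finRange n)).cost p : ℝ)
        ≤ ((List.finRange n).length : ℝ) := Nat.cast_le.2 (searchTree_cost_le _ _)
      _ = n := by simp
  | succ k ih =>
    have h2ε : (0:ℝ) ≤ 2*ε := by linarith
    have step : (sabAlg A (searchTree (List.finRange n)) (k+1)).expCost p
        ≤ T + 2*ε * (sabAlg A (searchTree (List.finRange n)) k).expCost p :=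
      seqAlg_expCost_le hcx hcy hbxy hsx hsy hexx
    calc (sabAlg A (searchTree (List.finRange n)) (k+1)).expCost p
        ≤ T + 2*ε * (sabAlg A (searchTree (List.finRange n)) k).expCost p := step
      _ ≤ T + 2*ε * (T * (∑ j ∈ Finset.range k, (2*ε)^j) + (n : ℝ) * (2*ε)^k) := by
          have := mul_le_mul_of_nonneg_left ih h2ε
          linarith
      _ = T * (∑ j ∈ Finset.range (k+1), (2*ε)^j) + (n : ℝ) * (2*ε)^(k+1) := by
          rw [geom_sum_succ]
          ring

/-- Any `ε`-error algorithm with expected cost `T` shows `(1 - 2ε) · RS(f) ≤ T`. -/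
theorem RS_le_of_alg {n : ℕ} {f : PFn (Fin n) Bool Bool} {A : RandAlg (Fin n) Bool Bool}
    {ε T : ℝ} (hε0 : 0 ≤ ε) (hε : ε < 1/2) (hT0 : 0 ≤ T)
    (hcomp : A.Computes f ε) (hcost : A.ECostLe f T) :
    (1 - 2*ε) * RS f ≤ T := by
  have h2ε0 : (0:ℝ) ≤ 2*ε := by linarith
  have h2ε1 : 2*ε < 1 := by linarith
  have hpos : 0 < 1 - 2*ε := by linarith
  -- membership of each truncation level in the zero-error set
  have hmem : ∀ k, RS f ≤ T * (∑ j ∈ Finset.range k, (2*ε)^j) + (n : ℝ) * (2*ε)^k := by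
    intro k
    set fb := searchTree (List.finRange n) with hfbdef
    have hTk0 : 0 ≤ T * (∑ j ∈ Finset.range k, (2*ε)^j) + (n : ℝ) * (2*ε)^k := by
      have h1 : 0 ≤ (∑ j ∈ Finset.range k, (2*ε)^j) :=
        Finset.sum_nonneg fun j _ => pow_nonneg h2ε0 j
      have h2 : (0:ℝ) ≤ (n : ℝ) := Nat.cast_nonneg n
      have h3 : (0:ℝ) ≤ (2*ε)^k := pow_nonneg h2ε0 k
      nlinarith
    have hout : ∀ p b, fsab f p = some b → ∀ ω, ((sabAlg A fb k).tree ω).output p = b := by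
      intro p b hb
      obtain ⟨s, hs, hsab, hbs⟩ := fsab_eq_some hb
      obtain ⟨i, hi⟩ := exists_sab_entry hs hsab
      refine sabAlg_tree_output hs hsab.1 hbs ?_ k
      rw [hbs]
      exact searchTree_output hs hsab.1 ⟨i, List.mem_finRange i, hi⟩
    refine csInf_le ⟨0, fun t ht => ht.1⟩ ⟨hTk0, sabAlg A fb k, ?_, ?_⟩
    · intro p b hb
      rw [succProb_eq_one (hout p b hb)]
      norm_num
    · intro p hp
      obtain ⟨b, hb⟩ := Option.isSome_iff_exists.1 hp
      obtain ⟨s, hs, hsab, _⟩ := fsab_eq_some hb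
      exact sabAlg_expCost_le hε0 hcomp hcost hs hsab k
  -- take limits
  have hbd : ∀ k, (1 - 2*ε) * RS f ≤ T + ((1-2*ε)*(n:ℝ) - T) * (2*ε)^k := by
    intro k
    have h1 := mul_le_mul_of_nonneg_left (hmem k) (le_of_lt hpos)
    have h2 : (1 - 2*ε) * (∑ j ∈ Finset.range k, (2*ε)^j) = 1 - (2*ε)^k := by
      have := geom_sum_mul (2*ε) k
      linear_combination -this
    nlinarith [pow_nonneg h2ε0 k]
  have hlim : Filter.Tendsto (fun k => T + ((1-2*ε)*(n:ℝ) - T) * (2*ε)^k)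
      Filter.atTop (nhds T) := by
    have h0 : Filter.Tendsto (fun k : ℕ => (2*ε)^k) Filter.atTop (nhds 0) :=
      tendsto_pow_atTop_nhds_zero_of_lt_one h2ε0 h2ε1
    have := (h0.const_mul ((1-2*ε)*(n:ℝ) - T)).const_add T
    simpa using this
  exact ge_of_tendsto' hlim hbd

/-- The brute-force deterministic algorithm. -/
theorem brute_exists {n : ℕ} (f : PFn (Fin n) Bool Bool) {ε : ℝ} (hε0 : 0 ≤ ε) :
    ∃ A : RandAlg (Fin n) Bool Bool, A.Computes f ε ∧ A.WCostLe n ∧ A.ECostLe f n := by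
  classical
  set t := enumTree (fun g => (f g).getD false) (List.finRange n) (fun _ => false) with ht
  have hout : ∀ x b, f x = some b → t.output x = b := by
    intro x b hb
    rw [ht, enumTree_output]
    have : (fun j => if j ∈ List.finRange n then x j else false) = x := by
      funext j; simp [List.mem_finRange]
    rw [this, hb]
    rfl
  have hcost : ∀ x, t.cost x = n := by
    intro x; rw [ht, enumTree_cost]; simp
  refine ⟨detAlg t, ?_, ?_, ?_⟩
  · intro x b hb
    rw [succProb_eq_one (fun _ => hout x b hb)]
    linarith
  · intro ω _ x
    exact le_of_eq (by exact_mod_cast hcost x)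
  · intro x _
    rw [detAlg_expCost]
    exact le_of_eq (by exact_mod_cast hcost x)

/-- Second inequality, for arbitrary `ε`. -/
theorem key2 {n : ℕ} (f : PFn (Fin n) Bool Bool) {ε : ℝ} (hε0 : 0 ≤ ε) (hε : ε < 1/2) :
    (1 - 2*ε) * RS f ≤ Rbar ε f := by
  obtain ⟨A, hA1, _, hA3⟩ := brute_exists f hε0
  refine le_csInf ⟨n, Nat.cast_nonneg n, A, hA1, hA3⟩ ?_
  rintro T ⟨hT0, B, hB1, hB2⟩
  exact RS_le_of_alg hε0 hε hT0 hB1 hB2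

/-- First inequality, for arbitrary `ε`. -/
theorem key1 {n : ℕ} (f : PFn (Fin n) Bool Bool) {ε : ℝ} (hε0 : 0 ≤ ε) :
    Rbar ε f ≤ Rw ε f := by
  obtain ⟨A, hA1, hA2, _⟩ := brute_exists f hε0
  refine csInf_le_csInf ⟨0, fun t ht => ht.1⟩ ⟨n, Nat.cast_nonneg n, A, hA1, hA2⟩ ?_
  rintro T ⟨hT0, B, hB1, hB2⟩
  refine ⟨hT0, B, hB1, fun x _ => ?_⟩
  letI := B.fin
  have : B.expCost x ≤ ∑ ω, B.p ω * T := by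
    refine Finset.sum_le_sum fun ω _ => ?_
    by_cases h : B.p ω = 0
    · simp [h]
    · exact mul_le_mul_of_nonneg_left (hB2 ω h x) (B.nonneg ω)
  calc B.expCost x ≤ ∑ ω, B.p ω * T := this
    _ = (∑ ω, B.p ω) * T := by rw [Finset.sum_mul]
    _ = T := by rw [B.sum_one, one_mul]

end Aux

/-- **Randomized sabotage complexity lower bounds randomized query complexity.**
For every partial Boolean function `f` and `ε ∈ [0, 1/2)`:
`R_ε(f) ≥ R̄_ε(f) ≥ (1 − 2ε) · RS(f)`; in particular `R(f) ≥ RS(f)/3`,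
i.e. `R(f) = Ω(RS(f))`. -/
theorem RS_lower_bounds_R {n : ℕ} (f : PFn (Fin n) Bool Bool)
    (ε : ℝ) (hε0 : 0 ≤ ε) (hε : ε < 1/2) :
    (Rbar ε f ≤ Rw ε f ∧ (1 - 2*ε) * RS f ≤ Rbar ε f) ∧ RS f / 3 ≤ Rb f := by
  refine ⟨⟨key1 f hε0, key2 f hε0 hε⟩, ?_⟩
  have h3 : (1 - 2*(1/3 : ℝ)) * RS f ≤ Rbar (1/3) f := key2 f (by norm_num) (by norm_num)
  have h4 : Rbar (1/3 : ℝ) f ≤ Rw (1/3) f := key1 f (by norm_num)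
  have h5 : (1 - 2*(1/3:ℝ)) * RS f = RS f / 3 := by ring
  rw [h5] at h3
  exact h3.trans h4
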